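/- Let d < e be positive integers and β ∈ (0,1) with β ≥ β* := 1 - 1/d + 1/e. Then the function F(x,y) = (x + y - (1-β)·min(dx, ey))²/(4xy) on {x>0, y>0} attains its infimum at points with y = (dβ + 1 - d)x, and the infimum equals dβ + 1 - d. -/

import Mathlib

/-- For `d < e` positive integers and `β ≥ β* = 1 - 1/d + 1/e` (jump regime),
the normalized volume `F(x,y) = (x + y - (1-β)·min(dx,ey))²/(4xy)` on the positive
quadrant is bounded below by `dβ + 1 - d`, with equality along the ray
`y = (dβ + 1 - d)x`. -/
theorem normalized_volume_min_jump (d e : ℕ) (hd : 0 < d) (hde : d < e)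
    (β : ℝ) (hβ0 : 0 < β) (hβ1 : β < 1)
    (hthr : 1 - 1 / (d : ℝ) + 1 / (e : ℝ) ≤ β) :
    (∀ x y : ℝ, 0 < x → 0 < y →
      (d : ℝ) * β + 1 - d
        ≤ (x + y - (1 - β) * min ((d : ℝ) * x) ((e : ℝ) * y)) ^ 2 / (4 * x * y)) ∧
    (∀ x : ℝ, 0 < x →
      (x + ((d : ℝ) * β + 1 - d) * x
          - (1 - β) * min ((d : ℝ) * x) ((e : ℝ) * (((d : ℝ) * β + 1 - d) * x))) ^ 2
          / (4 * x * (((d : ℝ) * β + 1 - d) * x))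
        = (d : ℝ) * β + 1 - d) := by
  have hd0 : (0 : ℝ) < d := by exact_mod_cast hd
  have he0 : (0 : ℝ) < e := by exact_mod_cast (hd.trans hde)
  have hde' : (d : ℝ) < e := by exact_mod_cast hde
  set γ : ℝ := (d : ℝ) * β + 1 - d with hγdef
  -- γ ≥ d/e > 0 and e * γ ≥ d
  have hkey : (d : ℝ) ≤ (e : ℝ) * γ := by
    have h1 : (d : ℝ) * (1 - 1 / d + 1 / e) ≤ d * β :=
      mul_le_mul_of_nonneg_left hthr hd0.le
    have h2 : (d : ℝ) * (1 - 1 / d + 1 / e) = d - 1 + d / e := by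
      field_simp
    have : (d : ℝ) - 1 + d / e ≤ d * β := by linarith [h1, h2.symm.le.trans h1]
    have : (d : ℝ) / e ≤ γ := by simp only [hγdef]; linarith
    calc (d : ℝ) = e * (d / e) := by field_simp
      _ ≤ e * γ := mul_le_mul_of_nonneg_left this he0.le
  have hγ0 : 0 < γ := by
    by_contra h
    push_neg at h
    nlinarith [mul_nonpos_of_nonneg_of_nonpos he0.le h]
  constructor
  · intro x y hx hy
    have hmin : min ((d : ℝ) * x) ((e : ℝ) * y) ≤ d * x := min_le_left _ _
    have hnum : γ * x + y ≤ x + y - (1 - β) * min ((d : ℝ) * x) ((e : ℝ) * y) := by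
      have h1β : (0 : ℝ) < 1 - β := by linarith
      nlinarith [mul_le_mul_of_nonneg_left hmin h1β.le]
    have hnum0 : 0 < γ * x + y := by positivity
    rw [le_div_iff₀ (by positivity)]
    have hsq : (γ * x + y) ^ 2 ≤ (x + y - (1 - β) * min ((d : ℝ) * x) ((e : ℝ) * y)) ^ 2 :=
      pow_le_pow_left₀ hnum0.le hnum 2
    nlinarith [sq_nonneg (γ * x - y)]
  · intro x hx
    have hmin : min ((d : ℝ) * x) ((e : ℝ) * (γ * x)) = d * x := by
      apply min_eq_left
      have := mul_le_mul_of_nonneg_right hkey hx.le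
      nlinarith
    rw [hmin]
    have h1 : x + γ * x - (1 - β) * ((d : ℝ) * x) = 2 * γ * x := by
      simp only [hγdef]; ring
    rw [h1]
    field_simp
    ring
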